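/- arXiv:2502.04652 — 2 statements merged into one kernel-verified Lean document; each statement's English description precedes it below -/
import Mathlib

section
/- Let Â = A + εB be a dual real n×n matrix with index of A equal to m and S = Σ_{i=1}^m A^{m-i} B A^{i-1}. Suppose the dual core-EP inverse of Â exists. Then rank([A^m S]) = rank(A^m) (block matrix obtained by horizontal concatenation) if and only if Â^⊕ = A^⊕ − ε A^⊕ B A^⊕. -/
open Matrix

abbrev Mat (n : ℕ) := Matrix (Fin n) (Fin n) ℝ

/-- A dual matrix `A + ε B` represented as the pair `(A, B)`. -/
abbrev DM (n : ℕ) := Mat n × Mat n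

/-- Dual matrix multiplication: `(A+εB)(C+εD) = AC + ε(AD+BC)`. -/
def dmul {n : ℕ} (X Y : DM n) : DM n := (X.1 * Y.1, X.1 * Y.2 + X.2 * Y.1)

/-- Componentwise transpose of a dual matrix. -/
def dT {n : ℕ} (X : DM n) : DM n := (X.1ᵀ, X.2ᵀ)

/-- Powers of a dual matrix. -/
def dpow {n : ℕ} (X : DM n) : ℕ → DM n
  | 0 => (1, 0)
  | k+1 => dmul X (dpow X k)

/-- `m` is the index of `A`: the least `m` with `rank (A^(m+1)) = rank (A^m)`. -/
def MatIndex {n : ℕ} (A : Mat n) (m : ℕ) : Prop :=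
  (A ^ (m+1)).rank = (A ^ m).rank ∧ ∀ k < m, (A ^ (k+1)).rank ≠ (A ^ k).rank

/-- `X` is the core-EP inverse of `A` (with `m` the index of `A`). -/
def IsCEP {n : ℕ} (m : ℕ) (A X : Mat n) : Prop :=
  (A * X)ᵀ = A * X ∧ A * (X * X) = X ∧ X * A ^ (m+1) = A ^ m

/-- `Xh` is a dual core-EP inverse of the dual matrix `Ah`. -/
def IsDualCEP {n : ℕ} (m : ℕ) (Ah Xh : DM n) : Prop :=
  dT (dmul Ah Xh) = dmul Ah Xh ∧ dmul Ah (dmul Xh Xh) = Xh ∧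
    dmul Xh (dpow Ah (m+1)) = dpow Ah m

/-! ### Auxiliary lemmas -/

lemma factor_iff_range_le {n : ℕ} (M S : Mat n) :
    (∃ Z : Mat n, S = M * Z) ↔
      LinearMap.range S.mulVecLin ≤ LinearMap.range M.mulVecLin := by
  constructor
  · rintro ⟨Z, rfl⟩
    rw [Matrix.mulVecLin_mul]
    exact LinearMap.range_comp_le_range _ _
  · intro h
    choose z hz using fun j => h (LinearMap.mem_range_self S.mulVecLin (Pi.single j 1))
    refine ⟨Matrix.of fun k j => z j k, ?_⟩
    ext i j
    have := congr_fun (hz j) i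
    simp only [Matrix.mulVecLin_apply] at this
    rw [Matrix.mul_apply]
    simp only [Matrix.mulVec_single, mul_one] at this
    simpa [Matrix.mulVec, dotProduct] using this.symm

lemma range_block {n : ℕ} (M S : Mat n) :
    LinearMap.range (Matrix.of fun i (j : Fin n ⊕ Fin n) =>
        Sum.elim (fun k => M i k) (fun k => S i k) j).mulVecLin
      = LinearMap.range M.mulVecLin ⊔ LinearMap.range S.mulVecLin := by
  set C : Matrix (Fin n) (Fin n ⊕ Fin n) ℝ := Matrix.of fun i (j : Fin n ⊕ Fin n) =>
        Sum.elim (fun k => M i k) (fun k => S i k) j with hC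
  have key : ∀ v : Fin n ⊕ Fin n → ℝ,
      C.mulVec v = M.mulVec (v ∘ Sum.inl) + S.mulVec (v ∘ Sum.inr) := by
    intro v; ext i
    simp [Matrix.mulVec, dotProduct, Fintype.sum_sum_type, hC]
  apply le_antisymm
  · rintro x ⟨v, rfl⟩
    rw [Matrix.mulVecLin_apply, key]
    exact Submodule.add_mem_sup ⟨_, rfl⟩ ⟨_, rfl⟩
  · rw [sup_le_iff]
    constructor
    · rintro x ⟨v, rfl⟩
      refine ⟨Sum.elim v 0, ?_⟩
      rw [Matrix.mulVecLin_apply, key]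
      simp
    · rintro x ⟨v, rfl⟩
      refine ⟨Sum.elim 0 v, ?_⟩
      rw [Matrix.mulVecLin_apply, key]
      simp

lemma rank_block_iff {n : ℕ} (M S : Mat n) :
    (Matrix.of fun i (j : Fin n ⊕ Fin n) =>
        Sum.elim (fun k => M i k) (fun k => S i k) j).rank = M.rank ↔
      ∃ Z : Mat n, S = M * Z := by
  rw [factor_iff_range_le, Matrix.rank, Matrix.rank, range_block]
  constructor
  · intro h
    have hle : LinearMap.range M.mulVecLin ≤
        LinearMap.range M.mulVecLin ⊔ LinearMap.range S.mulVecLin := le_sup_left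
    have := Submodule.eq_of_le_of_finrank_le hle h.le
    rw [this]
    exact le_sup_right
  · intro h
    rw [sup_eq_left.mpr h]

lemma range_pow_succ_le {n : ℕ} (A : Mat n) (k : ℕ) :
    LinearMap.range (A ^ (k+1)).mulVecLin ≤ LinearMap.range (A ^ k).mulVecLin := by
  rw [pow_succ, Matrix.mulVecLin_mul]
  exact LinearMap.range_comp_le_range _ _

lemma ker_step {n m : ℕ} (A : Mat n) (hr : (A ^ (m+1)).rank = (A ^ m).rank) :
    ∀ W : Mat n, A ^ (m+2) * W = 0 → A ^ (m+1) * W = 0 := by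
  have hrange : LinearMap.range (A ^ (m+1)).mulVecLin = LinearMap.range (A ^ m).mulVecLin :=
    Submodule.eq_of_le_of_finrank_le (range_pow_succ_le A m) hr.ge
  have hrange2 : LinearMap.range (A ^ (m+2)).mulVecLin = LinearMap.range (A ^ (m+1)).mulVecLin := by
    apply le_antisymm (range_pow_succ_le A (m+1))
    have e1 : A ^ (m+2) = A * A ^ (m+1) := by rw [← pow_succ']
    have e2 : A ^ (m+1) = A * A ^ m := by rw [← pow_succ']
    rw [e1, e2, Matrix.mulVecLin_mul, Matrix.mulVecLin_mul, LinearMap.range_comp,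
      LinearMap.range_comp, ← hrange, e2, Matrix.mulVecLin_mul, LinearMap.range_comp]
  have hker : LinearMap.ker (A ^ (m+2)).mulVecLin = LinearMap.ker (A ^ (m+1)).mulVecLin := by
    have hle : LinearMap.ker (A ^ (m+1)).mulVecLin ≤ LinearMap.ker (A ^ (m+2)).mulVecLin := by
      intro v hv
      simp only [LinearMap.mem_ker, Matrix.mulVecLin_apply] at hv ⊢
      have e1 : A ^ (m+2) = A * A ^ (m+1) := by rw [← pow_succ']
      rw [e1, ← Matrix.mulVec_mulVec, hv, Matrix.mulVec_zero]
    refine (Submodule.eq_of_le_of_finrank_le hle ?_).symm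
    have h1 := LinearMap.finrank_range_add_finrank_ker (A ^ (m+1)).mulVecLin
    have h2 := LinearMap.finrank_range_add_finrank_ker (A ^ (m+2)).mulVecLin
    rw [hrange2] at h2
    omega
  intro W hW
  ext i j
  have hcol : (A ^ (m+2)).mulVec (fun k => W k j) = 0 := by
    ext i'
    have := congr_fun (congr_fun hW i') j
    simpa [Matrix.mul_apply, Matrix.mulVec, dotProduct] using this
  have hmem : (fun k => W k j) ∈ LinearMap.ker (A ^ (m+2)).mulVecLin := by
    simpa [LinearMap.mem_ker, Matrix.mulVecLin_apply] using hcol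
  rw [hker] at hmem
  simp only [LinearMap.mem_ker, Matrix.mulVecLin_apply] at hmem
  have := congr_fun hmem i
  simpa [Matrix.mul_apply, Matrix.mulVec, dotProduct] using this

lemma pow_absorb {n : ℕ} (A X : Mat n) (h : A * (X * X) = X) (k : ℕ) :
    A ^ k * X ^ (k+1) = X := by
  induction k with
  | zero => simp
  | succ k ih =>
    have hx : A * X ^ (k+2) = X ^ (k+1) := by
      have e : X ^ (k+2) = (X * X) * X ^ k := by rw [pow_succ', pow_succ', mul_assoc]
      rw [e, ← mul_assoc, h, ← pow_succ']
    calc A ^ (k+1) * X ^ (k+2) = A ^ k * (A * X ^ (k+2)) := by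
          rw [pow_succ, mul_assoc]
      _ = X := by rw [hx, ih]

lemma cep_xax {n m : ℕ} {A X : Mat n} (h : IsCEP m A X) : X * (A * X) = X := by
  obtain ⟨h1, h2, h3⟩ := h
  have hp := pow_absorb A X h2 m
  calc X * (A * X) = X * (A * (A ^ m * X ^ (m+1))) := by rw [hp]
    _ = (X * A ^ (m+1)) * X ^ (m+1) := by
        rw [← mul_assoc, ← mul_assoc, mul_assoc X A _, ← pow_succ']
    _ = X := by rw [h3, hp]

lemma cep_unique {n m : ℕ} {A X Y : Mat n} (hX : IsCEP m A X) (hY : IsCEP m A Y) : X = Y := by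
  obtain ⟨x1, x2, x3⟩ := hX
  obtain ⟨y1, y2, y3⟩ := hY
  have hxp := pow_absorb A X x2 m
  have hyp := pow_absorb A Y y2 m
  have hPA : (A * X) * A ^ (m+1) = A ^ (m+1) := by
    rw [mul_assoc, x3, ← pow_succ']
  have hQform : A * Y = A ^ (m+1) * Y ^ (m+1) := by
    conv_lhs => rw [← hyp]
    rw [← mul_assoc, ← pow_succ']
  have hPQ : (A * X) * (A * Y) = A * Y := by
    rw [hQform, ← mul_assoc, hPA]
  have hQP : (A * Y) * (A * X) = A * X := by
    have hQA : (A * Y) * A ^ (m+1) = A ^ (m+1) := by rw [mul_assoc, y3, ← pow_succ']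
    have hPform : A * X = A ^ (m+1) * X ^ (m+1) := by
      conv_lhs => rw [← hxp]
      rw [← mul_assoc, ← pow_succ']
    rw [hPform, ← mul_assoc, hQA]
  have hPQ' : (A * X) * (A * Y) = A * X := by
    have := congrArg Matrix.transpose hQP
    rwa [Matrix.transpose_mul, x1, y1] at this
  have hPeqQ : A * X = A * Y := by rw [← hPQ, hPQ']
  calc X = X * (A * X) := (cep_xax ⟨x1, x2, x3⟩).symm
    _ = X * (A * Y) := by rw [hPeqQ]
    _ = X * (A * (A ^ m * Y ^ (m+1))) := by rw [hyp]
    _ = (X * A ^ (m+1)) * Y ^ (m+1) := by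
        rw [← mul_assoc, ← mul_assoc, mul_assoc X A _, ← pow_succ']
    _ = Y := by rw [x3, hyp]

lemma dpow_fst {n : ℕ} (A B : Mat n) (k : ℕ) : (dpow (A, B) k).1 = A ^ k := by
  induction k with
  | zero => rfl
  | succ k ih => rw [dpow, dmul]; simp only [ih]; rw [← pow_succ']

lemma dpow_snd {n : ℕ} (A B : Mat n) (k : ℕ) :
    (dpow (A, B) k).2 = ∑ i ∈ Finset.range k, A ^ (k - 1 - i) * B * A ^ i := by
  induction k with
  | zero => simp [dpow]
  | succ k ih =>
    rw [dpow, dmul]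
    simp only [ih, dpow_fst]
    rw [Finset.sum_range_succ, Finset.mul_sum]
    congr 1
    · apply Finset.sum_congr rfl
      intro i hi
      rw [Finset.mem_range] at hi
      have e1 : k + 1 - 1 - i = k - i := by omega
      have : k - i = (k - 1 - i) + 1 := by omega
      rw [e1, this, pow_succ']
      simp only [mul_assoc]
    · simp

theorem stmt11 {n m : ℕ} (A B : Mat n) (hm : MatIndex A m)
    (S : Mat n) (hS : S = ∑ i ∈ Finset.range m, A ^ (m - 1 - i) * B * A ^ i)
    (Ac : Mat n) (hAc : IsCEP m A Ac)
    (Xh : DM n) (hXh : IsDualCEP m (A, B) Xh) :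
    (Matrix.of fun i (j : Fin n ⊕ Fin n) =>
        Sum.elim (fun k => (A ^ m) i k) (fun k => S i k) j).rank = (A ^ m).rank ↔
      Xh = (Ac, -(Ac * B * Ac)) := by
  obtain ⟨X, Y⟩ := Xh
  obtain ⟨hd1, hd2, hd3⟩ := hXh
  -- components of the dual conditions
  have h11 : (A * X)ᵀ = A * X := congrArg Prod.fst hd1
  have h12 : (A * Y + B * X)ᵀ = A * Y + B * X := congrArg Prod.snd hd1
  have h21 : A * (X * X) = X := congrArg Prod.fst hd2
  have h22 : A * (X * Y + Y * X) + B * (X * X) = Y := congrArg Prod.snd hd2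
  have h31 : X * A ^ (m+1) = A ^ m := by
    have := congrArg Prod.fst hd3
    simpa [dmul, dpow_fst] using this
  have h32 : X * (dpow ((A, B) : DM n) (m+1)).2 + Y * A ^ (m+1)
      = (dpow ((A, B) : DM n) m).2 := by
    have := congrArg Prod.snd hd3
    simpa [dmul, dpow_fst] using this
  have hTrec : (dpow ((A, B) : DM n) (m+1)).2
      = A * (dpow ((A, B) : DM n) m).2 + B * A ^ m := by
    show (dmul (A, B) (dpow (A, B) m)).2 = _
    simp [dmul, dpow_fst]
  have hTmS : (dpow ((A, B) : DM n) m).2 = S := by rw [dpow_snd, hS]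
  rw [hTrec, hTmS] at h32
  -- the first component is the core-EP inverse of A
  have hXAc : Ac = X := cep_unique hAc ⟨h11, h21, h31⟩
  subst hXAc
  obtain ⟨a1, a2, a3⟩ := hAc
  -- basic facts about Ac
  have habs : A ^ m * Ac ^ (m+1) = Ac := pow_absorb A Ac a2 m
  have hxax : Ac * (A * Ac) = Ac := cep_xax ⟨a1, a2, a3⟩
  have hPP : (A * Ac) * (A * Ac) = A * Ac := by rw [mul_assoc A Ac, hxax]
  have hPAc : (A * Ac) * Ac = Ac := by rw [mul_assoc]; exact a2
  have hPA : (A * Ac) * A ^ (m+1) = A ^ (m+1) := by rw [mul_assoc, a3, ← pow_succ']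
  have hPA2 : (A * Ac) * A ^ (m+2) = A ^ (m+2) := by
    have e : A ^ (m+2) = A ^ (m+1) * A := pow_succ A (m+1)
    rw [e, ← mul_assoc, hPA]
  have hPform : A * Ac = A ^ (m+1) * Ac ^ (m+1) := by
    conv_lhs => rw [← habs]
    rw [← mul_assoc, ← pow_succ']
  have hA1 : A ^ (m+1) = Ac * A ^ (m+2) := by
    calc A ^ (m+1) = A ^ m * A := pow_succ A m
      _ = (Ac * A ^ (m+1)) * A := by rw [a3]
      _ = Ac * A ^ (m+2) := by rw [mul_assoc, ← pow_succ A (m+1)]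
  have hPAcK : A * Ac = Ac * (A ^ (m+2) * Ac ^ (m+1)) := by
    rw [hPform, hA1, mul_assoc]
  have hABA : (Ac * B * Ac) * A ^ (m+1) = Ac * (B * A ^ m) := by
    rw [mul_assoc (Ac * B), a3, mul_assoc]
  rw [rank_block_iff]
  constructor
  · -- rank condition implies the formula
    rintro ⟨Z, hZ⟩
    -- Step 1 : Y * A^(m+1) = -(Ac * (B * A^m))
    have e2 : Ac * (A * S) = S := by
      rw [hZ, ← mul_assoc A, ← pow_succ', ← mul_assoc, a3]
    have hYA : Y * A ^ (m+1) = -(Ac * (B * A ^ m)) := by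
      have h := h32
      rw [mul_add, e2, add_assoc] at h
      have h0 : Ac * (B * A ^ m) + Y * A ^ (m+1) = 0 :=
        add_left_cancel (h.trans (add_zero S).symm)
      exact eq_neg_of_add_eq_zero_right h0
    -- Step 2 : D * A^(m+1) = 0 and D * P = 0 where D = Y + Ac*B*Ac, P = A*Ac
    have hDA : (Y + Ac * B * Ac) * A ^ (m+1) = 0 := by
      rw [add_mul, hYA, hABA, neg_add_cancel]
    have hDP : (Y + Ac * B * Ac) * (A * Ac) = 0 := by
      rw [hPform, ← mul_assoc, hDA, zero_mul]
    have hYP : Y * (A * Ac) = -(Ac * B * Ac) := by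
      have h0 : Y * (A * Ac) + Ac * B * Ac = 0 := by
        have h := hDP
        rwa [add_mul, mul_assoc (Ac * B), hxax] at h
      exact eq_neg_of_add_eq_zero_left h0
    -- Step 3 : P * D = D
    have c2' : (A * Ac) * Y + (A * (Y * Ac) + B * (Ac * Ac)) = Y := by
      have h := h22
      rw [mul_add, add_assoc] at h
      rw [mul_assoc]
      exact h
    have hRP : (A * (Y * Ac) + B * (Ac * Ac)) * (A * Ac)
        = A * (Y * Ac) + B * (Ac * Ac) := by
      rw [add_mul, mul_assoc A (Y * Ac), mul_assoc Y Ac, hxax,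
        mul_assoc B (Ac * Ac), mul_assoc Ac Ac, hxax]
    have c2P : (A * Ac) * (Y * (A * Ac)) + (A * (Y * Ac) + B * (Ac * Ac))
        = Y * (A * Ac) := by
      have h := congrArg (fun W => W * (A * Ac)) c2'
      rwa [add_mul, hRP, mul_assoc] at h
    have hDYP : Y + Ac * B * Ac = Y - Y * (A * Ac) := by
      rw [hYP, sub_neg_eq_add]
    have hPD : (A * Ac) * (Y + Ac * B * Ac) = Y + Ac * B * Ac := by
      rw [hDYP, mul_sub]
      have e3 : (A * Ac) * Y = Y - (A * (Y * Ac) + B * (Ac * Ac)) := eq_sub_of_add_eq c2'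
      have e4 : (A * Ac) * (Y * (A * Ac))
          = Y * (A * Ac) - (A * (Y * Ac) + B * (Ac * Ac)) := eq_sub_of_add_eq c2P
      rw [e3, e4]
      abel
    have hPABA : (A * Ac) * (Ac * B * Ac) = Ac * B * Ac := by
      rw [← mul_assoc, ← mul_assoc, hPAc]
    have hPY : (A * Ac) * Y = Y := by
      have h := hPD
      rw [mul_add, hPABA] at h
      exact add_right_cancel h
    -- Step 4 : properties of N = A * D
    have hNform : A * (Y + Ac * B * Ac)
        = A ^ (m+2) * (Ac ^ (m+1) * (Y + Ac * B * Ac)) := by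
      conv_lhs => rw [← hPD]
      rw [hPform, mul_assoc (A ^ (m+1)), ← mul_assoc A, ← pow_succ' A (m+1)]
    have hPN : (A * Ac) * (A * (Y + Ac * B * Ac)) = A * (Y + Ac * B * Ac) := by
      rw [hNform, ← mul_assoc, hPA2]
    have hNP : (A * (Y + Ac * B * Ac)) * (A * Ac) = 0 := by
      rw [mul_assoc, hDP, mul_zero]
    -- Step 5 : P * (B * (Ac * Ac)) = B * (Ac * Ac)
    have hR0 : A * (Y * Ac) + B * (Ac * Ac) = 0 := by
      have h := c2'
      rw [hPY] at h
      exact add_left_cancel (h.trans (add_zero Y).symm)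
    have e0 : A * (Y + Ac * B * Ac) = A * Y + (A * Ac) * (B * Ac) := by
      rw [mul_add]
      congr 1
      simp only [mul_assoc]
    have hAYAc : A * (Y * Ac) = -((A * Ac) * (B * (Ac * Ac))) := by
      have hADAc : (A * (Y + Ac * B * Ac)) * Ac = 0 := by
        have : (A * (Y + Ac * B * Ac)) * Ac = (A * (Y + Ac * B * Ac)) * ((A * Ac) * Ac) := by
          rw [hPAc]
        rw [this, ← mul_assoc, hNP, zero_mul]
      have h5 : (A * Y) * Ac + ((A * Ac) * (B * Ac)) * Ac = 0 := by
        have h := hADAc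
        rwa [e0, add_mul] at h
      have e6 : ((A * Ac) * (B * Ac)) * Ac = (A * Ac) * (B * (Ac * Ac)) := by
        rw [mul_assoc, mul_assoc B Ac Ac]
      rw [e6] at h5
      rw [← mul_assoc]
      exact eq_neg_of_add_eq_zero_left h5
    have hBAc2 : (A * Ac) * (B * (Ac * Ac)) = B * (Ac * Ac) := by
      have h := hR0
      rw [hAYAc] at h
      exact neg_inj.mp (eq_neg_of_add_eq_zero_left h)
    -- Step 6 : Acᵀ * N = 0
    have hMP : (A * Y + B * Ac) * (A * Ac) = B * Ac - (A * Ac) * (B * Ac) := by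
      rw [add_mul]
      have e1 : (A * Y) * (A * Ac) = -((A * Ac) * (B * Ac)) := by
        rw [mul_assoc, hYP, mul_neg]
        congr 1
        simp only [mul_assoc]
      have e2' : (B * Ac) * (A * Ac) = B * Ac := by rw [mul_assoc, hxax]
      rw [e1, e2']
      abel
    have hPM : (A * Ac) * (A * Y + B * Ac) = (B * Ac - (A * Ac) * (B * Ac))ᵀ := by
      rw [← hMP, Matrix.transpose_mul, h12, a1]
    have hND : A * (Y + Ac * B * Ac) = (A * Ac) * (A * Y + B * Ac) := by
      conv_lhs => rw [← hPN]
      rw [e0, mul_add, mul_add]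
      congr 1
      rw [← mul_assoc, hPP]
    have hAcTN : Acᵀ * (A * (Y + Ac * B * Ac)) = 0 := by
      rw [hND, hPM, ← Matrix.transpose_mul]
      have hz : (B * Ac - (A * Ac) * (B * Ac)) * Ac = 0 := by
        rw [sub_mul, mul_assoc B Ac Ac, mul_assoc (A * Ac) (B * Ac) Ac,
          mul_assoc B Ac Ac, hBAc2, sub_self]
      rw [hz, Matrix.transpose_zero]
    -- Step 7 : A * D = 0
    have hN0 : A * (Y + Ac * B * Ac) = 0 := by
      have hform : A * (Y + Ac * B * Ac)
          = Ac * ((A ^ (m+2) * Ac ^ (m+1)) * (A * (Y + Ac * B * Ac))) := by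
        conv_lhs => rw [← hPN]
        rw [hPAcK, mul_assoc]
      have hz : (Acᴴ * Ac) * ((A ^ (m+2) * Ac ^ (m+1)) * (A * (Y + Ac * B * Ac))) = 0 := by
        show (Acᵀ * Ac) * _ = 0
        rw [mul_assoc, ← hform, hAcTN]
      have h6 := (Matrix.conjTranspose_mul_self_mul_eq_zero Ac _).mp hz
      exact hform.trans h6
    -- Step 8 : D = 0
    have hDform : (Y + Ac * B * Ac) = A ^ (m+1) * (Ac ^ (m+1) * (Y + Ac * B * Ac)) := by
      conv_lhs => rw [← hPD]
      rw [hPform, mul_assoc]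
    have hker : A ^ (m+2) * (Ac ^ (m+1) * (Y + Ac * B * Ac)) = 0 := by
      have e : A ^ (m+2) = A * A ^ (m+1) := pow_succ' A (m+1)
      rw [e, mul_assoc, ← hDform, hN0]
    have hD0 : Y + Ac * B * Ac = 0 := by
      rw [hDform]
      exact ker_step A hm.1 _ hker
    rw [Prod.mk.injEq]
    exact ⟨rfl, eq_neg_of_add_eq_zero_left hD0⟩
  · -- the formula implies the rank condition
    intro h
    have hY : Y = -(Ac * B * Ac) := by
      rw [Prod.mk.injEq] at h
      exact h.2
    have h := h32
    rw [hY, mul_add, neg_mul, hABA, add_assoc, add_neg_cancel, add_zero] at h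
    refine ⟨Ac ^ (m+1) * (A * S), ?_⟩
    calc S = Ac * (A * S) := h.symm
      _ = A ^ m * (Ac ^ (m+1) * (A * S)) := by
          conv_lhs => rw [← habs]
          rw [mul_assoc]
end

section
/- Let Â = A + εB be a dual real n×n matrix with index of A equal to m, and S = Σ_{i=1}^m A^{m-i} B A^{i-1}. If the dual Moore–Penrose inverse (Â^m)^† exists and (Â^m)^† = (A^m)^† − ε (A^m)^† S (A^m)^†, then the dual core-EP inverse of Â exists and Â^⊕ = A^⊕ − ε A^⊕ B A^⊕. -/
open Matrix

/-- `X` is the Moore-Penrose inverse of `M`. -/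
def IsMP {n : ℕ} (M X : Mat n) : Prop :=
  M * X * M = M ∧ X * M * X = X ∧ (M * X)ᵀ = M * X ∧ (X * M)ᵀ = X * M

/-- `Xh` is a dual Moore-Penrose inverse of the dual matrix `Mh`. -/
def IsDualMP {n : ℕ} (Mh Xh : DM n) : Prop :=
  dmul (dmul Mh Xh) Mh = Mh ∧ dmul (dmul Xh Mh) Xh = Xh ∧
    dT (dmul Mh Xh) = dmul Mh Xh ∧ dT (dmul Xh Mh) = dmul Xh Mh

/- ### Auxiliary lemmas -/

lemma mulVec_ext' {n : ℕ} {M N : Mat n} (h : ∀ v, M *ᵥ v = N *ᵥ v) : M = N := by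
  ext i j
  simpa using congrFun (h (Pi.single j 1)) i

lemma fix_range {n m : ℕ} (A : Mat n) (hm : (A ^ (m+1)).rank = (A ^ m).rank)
    (Q : Mat n) (h : Q * A ^ (m+1) = A ^ (m+1)) : Q * A ^ m = A ^ m := by
  have hle : LinearMap.range (A ^ (m+1)).mulVecLin ≤ LinearMap.range (A ^ m).mulVecLin := by
    rw [pow_succ, Matrix.mulVecLin_mul]
    exact LinearMap.range_comp_le_range _ _
  have heq : LinearMap.range (A ^ (m+1)).mulVecLin = LinearMap.range (A ^ m).mulVecLin :=
    Submodule.eq_of_le_of_finrank_le hle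
      (le_of_eq (id hm.symm : (A ^ m).rank = (A ^ (m+1)).rank))
  apply mulVec_ext'
  intro v
  have hv : A ^ m *ᵥ v ∈ LinearMap.range (A ^ (m+1)).mulVecLin := by
    rw [heq]; exact ⟨v, rfl⟩
  obtain ⟨w, hw⟩ := hv
  simp only [Matrix.mulVecLin_apply] at hw
  calc (Q * A ^ m) *ᵥ v = Q *ᵥ (A ^ m *ᵥ v) := by rw [mulVec_mulVec]
    _ = Q *ᵥ (A ^ (m+1) *ᵥ w) := by rw [hw]
    _ = (Q * A ^ (m+1)) *ᵥ w := by rw [mulVec_mulVec]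
    _ = A ^ (m+1) *ᵥ w := by rw [h]
    _ = A ^ m *ᵥ v := hw

lemma dpow_eq {n : ℕ} (A B : Mat n) (k : ℕ) :
    dpow (A, B) k = (A ^ k, ∑ i ∈ Finset.range k, A ^ (k - 1 - i) * B * A ^ i) := by
  induction k with
  | zero => simp [dpow]
  | succ k ih =>
    rw [dpow, ih, dmul]
    refine Prod.ext ?_ ?_
    · simp [pow_succ']
    · simp only
      rw [Finset.sum_range_succ, Finset.mul_sum]
      congr 1
      · apply Finset.sum_congr rfl
        intro i hi
        have hi' : i < k := Finset.mem_range.mp hi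
        have : k + 1 - 1 - i = (k - 1 - i) + 1 := by omega
        rw [this, pow_succ', ← mul_assoc, ← mul_assoc]
      · have : k + 1 - 1 - k = 0 := by omega
        rw [this, pow_zero, one_mul]

lemma ext_mul {n : ℕ} {a b : Mat n} (h : a = b) (X : Mat n) : a * X = b * X := by rw [h]

lemma powAc {n : ℕ} (A Ac : Mat n) (hc2 : A * (Ac * Ac) = Ac) :
    ∀ k : ℕ, A ^ k * Ac ^ (k+1) = Ac := by
  intro k
  induction k with
  | zero => simp
  | succ k ih =>
    have h1 : A ^ (k+1) * Ac ^ (k+1+1) = A ^ k * ((A * (Ac * Ac)) * Ac ^ k) := by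
      rw [pow_succ A, pow_succ' Ac (k+1), pow_succ' Ac k]
      simp only [mul_assoc]
    rw [h1, hc2, ← mul_assoc, mul_assoc, ← pow_succ' Ac k, ih]

theorem stmt12 {n m : ℕ} (A B : Mat n) (hm : MatIndex A m)
    (S : Mat n) (hS : S = ∑ i ∈ Finset.range m, A ^ (m - 1 - i) * B * A ^ i)
    (Ac : Mat n) (hAc : IsCEP m A Ac)
    (P : Mat n) (hP : IsMP (A ^ m) P)
    (hdP : IsDualMP (dpow (A, B) m) (P, -(P * S * P))) :
    IsDualCEP m (A, B) (Ac, -(Ac * B * Ac)) := by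
  obtain ⟨hc1, hc2, hc3⟩ := hAc
  obtain ⟨mp1, mp2, mp3, mp4⟩ := hP
  -- basic parametrized rewriting facts
  have pA : ∀ (k : ℕ) (X : Mat n), A * (A ^ k * X) = A ^ (k+1) * X := by
    intro k X; rw [← mul_assoc, ← pow_succ']
  have c2' : ∀ X : Mat n, A * (Ac * (Ac * X)) = Ac * X := fun X => by
    simpa only [mul_assoc] using ext_mul hc2 X
  have c3' : ∀ X : Mat n, Ac * (A ^ (m+1) * X) = A ^ m * X := fun X => by
    simpa only [mul_assoc] using ext_mul hc3 X
  have mp1' : ∀ X : Mat n, A ^ m * (P * (A ^ m * X)) = A ^ m * X := fun X => by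
    simpa only [mul_assoc] using ext_mul mp1 X
  have mp2r : P * (A ^ m * P) = P := by
    simpa only [mul_assoc] using mp2
  have pAck : ∀ k, A ^ k * Ac ^ (k+1) = Ac := powAc A Ac hc2
  have hAAc : ∀ k : ℕ, A * Ac = A ^ (k+1) * Ac ^ (k+1) := by
    intro k
    calc A * Ac = A * (A ^ k * Ac ^ (k+1)) := by rw [pAck]
      _ = A ^ (k+1) * Ac ^ (k+1) := pA k _
  have hfix : (A * Ac) * A ^ (m+1) = A ^ (m+1) := by
    rw [mul_assoc, hc3, ← pow_succ']
  have hfixm : (A * Ac) * A ^ m = A ^ m := fix_range A hm.1 _ hfix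
  have key2 : (A * Ac) * (A ^ m * P) = A ^ m * P := by
    rw [← mul_assoc, hfixm]
  have key1 : (A ^ m * P) * (A * Ac) = A * Ac := by
    rw [hAAc m]
    calc (A ^ m * P) * (A ^ (m+1) * Ac ^ (m+1))
        = A ^ m * (P * (A ^ m * (A * Ac ^ (m+1)))) := by
          rw [pow_succ]; simp only [mul_assoc]
      _ = A ^ m * (A * Ac ^ (m+1)) := mp1' _
      _ = A ^ (m+1) * Ac ^ (m+1) := by rw [← mul_assoc, ← pow_succ]
  have hJ : A * Ac = A ^ m * P := by
    have t1 : (A * Ac) * (A ^ m * P) = A * Ac := by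
      have t := congrArg Matrix.transpose key1
      rwa [transpose_mul, hc1, mp3] at t
    exact (key2.symm.trans t1).symm
  have hAcA : Ac * (A * Ac) = Ac := by
    calc Ac * (A * Ac) = Ac * (A * (A ^ m * Ac ^ (m+1))) := by rw [pAck m]
      _ = Ac * (A ^ (m+1) * Ac ^ (m+1)) := by rw [pA m]
      _ = A ^ m * Ac ^ (m+1) := c3' _
      _ = Ac := pAck m
  have hAJ : (A ^ m * P) * (A * (A ^ m * P)) = A * (A ^ m * P) := by
    calc (A ^ m * P) * (A * (A ^ m * P))
        = (A ^ m * P) * (A ^ (m+1) * P) := by rw [pA m]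
      _ = A ^ m * (P * (A ^ m * (A * P))) := by rw [pow_succ]; simp only [mul_assoc]
      _ = A ^ m * (A * P) := mp1' _
      _ = A ^ (m+1) * P := by rw [← mul_assoc, ← pow_succ]
      _ = A * (A ^ m * P) := (pA m P).symm
  have hJAJ : ∀ j : ℕ, (A ^ m * P) * (A ^ j * (A ^ m * P)) = A ^ j * (A ^ m * P) := by
    intro j
    induction j with
    | zero =>
      simp only [pow_zero, one_mul]
      rw [← mul_assoc, mp1]
    | succ j ih =>
      calc (A ^ m * P) * (A ^ (j+1) * (A ^ m * P))
          = (A ^ m * P) * (A * (A ^ j * (A ^ m * P))) := by rw [pA j]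
        _ = (A ^ m * P) * (A * ((A ^ m * P) * (A ^ j * (A ^ m * P)))) := by rw [ih]
        _ = ((A ^ m * P) * (A * (A ^ m * P))) * (A ^ j * (A ^ m * P)) := by
            simp only [mul_assoc]
        _ = (A * (A ^ m * P)) * (A ^ j * (A ^ m * P)) := by rw [hAJ]
        _ = A * ((A ^ m * P) * (A ^ j * (A ^ m * P))) := by simp only [mul_assoc]
        _ = A * (A ^ j * (A ^ m * P)) := by rw [ih]
        _ = A ^ (j+1) * (A ^ m * P) := pA j _
  -- extract the dual MP equations
  rw [dpow_eq, ← hS] at hdP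
  obtain ⟨d1, -, d3, -⟩ := hdP
  have d3' := congrArg Prod.snd d3
  simp only [dmul, dT] at d3'
  have d1' := congrArg Prod.snd d1
  simp only [dmul] at d1'
  -- E3 ⟹ S*P = A^m*(P*(S*P))
  simp only [mul_neg, mul_assoc, neg_add_eq_sub] at d3'
  -- d3' : (S * P - A^m * (P * (S * P)))ᵀ = S * P - A^m * (P * (S * P))
  have hWJ : (S * P - A ^ m * (P * (S * P))) * (A ^ m * P) = S * P - A ^ m * (P * (S * P)) := by
    rw [sub_mul]
    congr 1
    · calc S * P * (A ^ m * P) = S * (P * (A ^ m * P)) := by simp only [mul_assoc]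
        _ = S * P := by rw [mp2r]
    · calc A ^ m * (P * (S * P)) * (A ^ m * P)
          = A ^ m * (P * (S * (P * (A ^ m * P)))) := by simp only [mul_assoc]
        _ = A ^ m * (P * (S * P)) := by rw [mp2r]
  have hJW : (A ^ m * P) * (S * P - A ^ m * (P * (S * P))) = 0 := by
    rw [mul_sub]
    have e1 : (A ^ m * P) * (S * P) = A ^ m * (P * (S * P)) := by simp only [mul_assoc]
    have e2 : (A ^ m * P) * (A ^ m * (P * (S * P))) = A ^ m * (P * (S * P)) := by
      simp only [mul_assoc]; exact mp1' _
    rw [e1, e2, sub_self]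
  have hWz : S * P - A ^ m * (P * (S * P)) = 0 := by
    have t := congrArg Matrix.transpose hJW
    rw [transpose_mul, d3', mp3, transpose_zero] at t
    rw [← hWJ, t]
  have e3 : S * P = A ^ m * (P * (S * P)) := by rwa [sub_eq_zero] at hWz
  -- E1 ⟹ A^m * (P * S) = S
  have e3' : S * (P * A ^ m) = A ^ m * (P * (S * (P * A ^ m))) := by
    simpa only [mul_assoc] using ext_mul e3 (A ^ m)
  have hJS : A ^ m * (P * S) = S := by
    have h := d1'
    simp only [mul_neg, neg_mul, add_mul, mul_assoc] at h
    rw [← e3', neg_add_cancel, add_zero] at h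
    exact h
  -- the nilpotent part: E := 1 - A^m*P, T := E*(B*Ac)
  obtain ⟨E, hE⟩ : ∃ E : Mat n, E = 1 - A ^ m * P := ⟨_, rfl⟩
  obtain ⟨T, hTdef⟩ : ∃ T : Mat n, T = E * (B * Ac) := ⟨_, rfl⟩
  have hEA : ∀ j : ℕ, E * (A ^ j * (A ^ m * P)) = 0 := by
    intro j
    rw [hE, sub_mul, one_mul, hJAJ j, sub_self]
  have hEJ : E * (A ^ m * P) = 0 := by
    have := hEA 0
    simpa using this
  have hEAm : E * A ^ m = 0 := by
    rw [hE, sub_mul, one_mul, mp1, sub_self]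
  have hEE : E * E = E := by
    nth_rewrite 2 [hE]
    rw [mul_sub, mul_one, hEJ, sub_zero]
  have hEaj : ∀ a j : ℕ, (E * A ^ a) * (E * A ^ j) = E * A ^ (a+j) := by
    intro a j
    have hEAj : E * A ^ j = A ^ j - (A ^ m * P) * A ^ j := by
      rw [hE, sub_mul, one_mul]
    have t1 : A ^ a * (E * A ^ j) = A ^ (a+j) - (A ^ a * (A ^ m * P)) * A ^ j := by
      rw [hEAj, mul_sub, ← pow_add, ← mul_assoc]
    calc (E * A ^ a) * (E * A ^ j) = E * (A ^ a * (E * A ^ j)) := by simp only [mul_assoc]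
      _ = E * A ^ (a+j) - E * ((A ^ a * (A ^ m * P)) * A ^ j) := by rw [t1, mul_sub]
      _ = E * A ^ (a+j) - (E * (A ^ a * (A ^ m * P))) * A ^ j := by simp only [mul_assoc]
      _ = E * A ^ (a+j) := by rw [hEA a, zero_mul, sub_zero]
  have hsplit : B * Ac = (A ^ m * P) * (B * Ac) + T := by
    rw [hTdef, hE, sub_mul, one_mul]
    abel
  -- master identity
  have hES : E * S = 0 := by
    rw [hE, sub_mul, one_mul, mul_assoc, hJS, sub_self]
  have step1 : ∀ i < m, (A ^ (m-1-i) * B * A ^ i) * Ac ^ m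
      = A ^ (m-1-i) * (B * (Ac * Ac ^ (m-1-i))) := by
    intro i hi
    have hpow : Ac ^ m = Ac ^ (i+1) * Ac ^ (m-1-i) := by
      rw [← pow_add]; congr 1; omega
    have h1 : A ^ i * Ac ^ m = Ac * Ac ^ (m-1-i) := by
      rw [hpow, ← mul_assoc, pAck i]
    calc (A ^ (m-1-i) * B * A ^ i) * Ac ^ m
        = A ^ (m-1-i) * (B * (A ^ i * Ac ^ m)) := by simp only [mul_assoc]
      _ = A ^ (m-1-i) * (B * (Ac * Ac ^ (m-1-i))) := by rw [h1]
  have hmast : ∑ i ∈ Finset.range m, E * (A ^ (m-1-i) * (B * (Ac * Ac ^ (m-1-i)))) = 0 := by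
    calc ∑ i ∈ Finset.range m, E * (A ^ (m-1-i) * (B * (Ac * Ac ^ (m-1-i))))
        = ∑ i ∈ Finset.range m, E * ((A ^ (m-1-i) * B * A ^ i) * Ac ^ m) :=
          Finset.sum_congr rfl (fun i hi => by rw [step1 i (Finset.mem_range.mp hi)])
      _ = E * (S * Ac ^ m) := by rw [hS, Finset.sum_mul, Finset.mul_sum]
      _ = 0 := by rw [← mul_assoc, hES, zero_mul]
  have hmast2 : ∑ j ∈ Finset.range m, E * (A ^ j * (B * (Ac * Ac ^ j))) = 0 :=
    (Finset.sum_range_reflect (fun j => E * (A ^ j * (B * (Ac * Ac ^ j)))) m).symm.trans hmast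
  have hterm : ∀ j : ℕ, E * (A ^ j * (B * (Ac * Ac ^ j))) = (E * A ^ j) * (T * Ac ^ j) := by
    intro j
    have h1 : B * (Ac * Ac ^ j) = ((A ^ m * P) * (B * Ac) + T) * Ac ^ j := by
      rw [← hsplit, mul_assoc]
    rw [h1, add_mul, mul_add, mul_add]
    have h2 : E * (A ^ j * ((A ^ m * P) * (B * Ac) * Ac ^ j)) = 0 := by
      calc E * (A ^ j * ((A ^ m * P) * (B * Ac) * Ac ^ j))
          = (E * (A ^ j * (A ^ m * P))) * ((B * Ac) * Ac ^ j) := by simp only [mul_assoc]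
        _ = 0 := by rw [hEA j, zero_mul]
    rw [h2, zero_add, ← mul_assoc]
  have master0 : ∑ j ∈ Finset.range m, (E * A ^ j) * (T * Ac ^ j) = 0 := by
    rw [← Finset.sum_congr rfl (fun j _ => hterm j)]
    exact hmast2
  have masterA : ∀ a : ℕ, ∑ j ∈ Finset.range m, (E * A ^ (a+j)) * (T * Ac ^ (a+j)) = 0 := by
    intro a
    have h0 := congrArg (fun M : Mat n => (E * A ^ a) * M * Ac ^ a) master0
    simp only [Finset.mul_sum, Finset.sum_mul, zero_mul, mul_zero] at h0
    rw [← h0]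
    apply Finset.sum_congr rfl
    intro j _
    calc (E * A ^ (a+j)) * (T * Ac ^ (a+j))
        = ((E * A ^ a) * (E * A ^ j)) * (T * (Ac ^ j * Ac ^ a)) := by
          rw [hEaj, ← pow_add, Nat.add_comm j a]
      _ = E * A ^ a * ((E * A ^ j) * (T * Ac ^ j)) * Ac ^ a := by simp only [mul_assoc]
  have hRbig : ∀ a : ℕ, m ≤ a → (E * A ^ a) * (T * Ac ^ a) = 0 := by
    intro a ha
    have hpa : A ^ a = A ^ m * A ^ (a-m) := by rw [← pow_add]; congr 1; omega
    rw [hpa, ← mul_assoc E (A ^ m) (A ^ (a-m)), hEAm, zero_mul, zero_mul]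
  have hRall : ∀ d a : ℕ, m ≤ a + d → (E * A ^ a) * (T * Ac ^ a) = 0 := by
    intro d
    induction d with
    | zero => intro a ha; exact hRbig a (by omega)
    | succ d ih =>
      intro a ha
      by_cases hma : m ≤ a
      · exact hRbig a hma
      · have hm0 : 0 < m := by omega
        have hsum := masterA a
        rw [Finset.sum_eq_single_of_mem 0 (Finset.mem_range.mpr hm0)
          (fun j _ hj0 => ih (a+j) (by omega))] at hsum
        simpa using hsum
  have hT0 : T = 0 := by
    have h0 := hRall m 0 (by omega)
    have hET : E * T = T := by rw [hTdef, ← mul_assoc, hEE]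
    simpa [hET] using h0
  have hPBAc : (A ^ m * P) * (B * Ac) = B * Ac := by
    have h := hsplit
    rw [hT0, add_zero] at h
    exact h.symm
  have hPBAc' : ∀ X : Mat n, A ^ m * (P * (B * (Ac * X))) = B * (Ac * X) := fun X => by
    simpa only [mul_assoc] using ext_mul hPBAc X
  -- final assembly
  refine ⟨?_, ?_, ?_⟩
  · -- self-adjointness equation
    have hz : A * -(Ac * B * Ac) + B * Ac = 0 := by
      have h1 : A * (Ac * B * Ac) = B * Ac := by
        calc A * (Ac * B * Ac) = (A * Ac) * (B * Ac) := by simp only [mul_assoc]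
          _ = (A ^ m * P) * (B * Ac) := by rw [hJ]
          _ = B * Ac := hPBAc
      rw [mul_neg, h1, neg_add_cancel]
    simp only [dmul, dT, Prod.mk.injEq]
    exact ⟨hc1, by rw [hz, transpose_zero]⟩
  · -- outer-inverse equation
    simp only [dmul, Prod.mk.injEq]
    refine ⟨hc2, ?_⟩
    have g1 : A * (Ac * (Ac * B * Ac)) = Ac * B * Ac := by
      simpa only [mul_assoc] using c2' (B * Ac)
    have g2 : A * ((Ac * B * Ac) * Ac) = B * (Ac * Ac) := by
      calc A * ((Ac * B * Ac) * Ac) = (A * Ac) * (B * (Ac * Ac)) := by simp only [mul_assoc]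
        _ = A ^ m * (P * (B * (Ac * Ac))) := by rw [hJ, mul_assoc]
        _ = B * (Ac * Ac) := hPBAc' Ac
    rw [mul_neg, neg_mul, mul_add, mul_neg, mul_neg, g1, g2]
    abel
  · -- the rank equation
    have hdp : dpow (A, B) (m+1) = dmul (A, B) (dpow (A, B) m) := rfl
    rw [hdp, dpow_eq, ← hS]
    simp only [dmul, Prod.mk.injEq]
    constructor
    · calc Ac * (A * A ^ m) = Ac * A ^ (m+1) := by rw [← pow_succ']
        _ = A ^ m := hc3
    · have t1 : Ac * (A * S) = S := by
        calc Ac * (A * S) = Ac * (A * (A ^ m * (P * S))) := by rw [hJS]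
          _ = Ac * (A ^ (m+1) * (P * S)) := by rw [pA m]
          _ = A ^ m * (P * S) := c3' _
          _ = S := hJS
      have t2 : (Ac * B * Ac) * (A * A ^ m) = Ac * (B * A ^ m) := by
        calc (Ac * B * Ac) * (A * A ^ m) = Ac * (B * (Ac * A ^ (m+1))) := by
              rw [← pow_succ']; simp only [mul_assoc]
          _ = Ac * (B * A ^ m) := by rw [hc3]
      rw [mul_add, t1, neg_mul, t2]
      abel
end
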